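/- For every natural number n ≥ 1, the group Gₙ generated by α₁, α₂, α₃, β₁, β₂, β₃ subject to the relations α₂ = [β₁⁻¹, β₂⁻¹], β₂ = [β₁, α₂⁻¹], α₁ = [β₁⁻¹, β₃⁻¹], β₁ = [α₁⁻¹, β₃], α₃ = [β₂⁻¹, β₃⁻¹], β₃ = [β₂, α₃⁻¹]^(-(n+1)), together with [α₁, β₁] = 1, [α₁, α₂] = 1, [α₁, β₂] = 1, [α₁, α₃] = 1, [β₁, α₃] = 1, [α₂, β₂] = 1, [α₂, α₃] = 1, [α₂, β₃] = 1, [α₃, β₃] = 1, is the trivial group. -/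

import Mathlib

namespace Stmt1

open scoped commutatorElement

def α₁ : FreeGroup (Fin 6) := FreeGroup.of 0
def α₂ : FreeGroup (Fin 6) := FreeGroup.of 1
def α₃ : FreeGroup (Fin 6) := FreeGroup.of 2
def β₁ : FreeGroup (Fin 6) := FreeGroup.of 3
def β₂ : FreeGroup (Fin 6) := FreeGroup.of 4
def β₃ : FreeGroup (Fin 6) := FreeGroup.of 5

/-- Relators of the presentation of `π₁(Xₙ)`: as in Section 3, except that
the relation `β₃ = ⁅β₂, α₃⁻¹⁆` is replaced by `β₃ = ⁅β₂, α₃⁻¹⁆^(-(n+1))`. -/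
def rels (n : ℕ) : Set (FreeGroup (Fin 6)) :=
  { α₂⁻¹ * ⁅β₁⁻¹, β₂⁻¹⁆,
    β₂⁻¹ * ⁅β₁, α₂⁻¹⁆,
    α₁⁻¹ * ⁅β₁⁻¹, β₃⁻¹⁆,
    β₁⁻¹ * ⁅α₁⁻¹, β₃⁆,
    α₃⁻¹ * ⁅β₂⁻¹, β₃⁻¹⁆,
    β₃⁻¹ * ⁅β₂, α₃⁻¹⁆ ^ (-((n : ℤ) + 1)),
    ⁅α₁, β₁⁆, ⁅α₁, α₂⁆, ⁅α₁, β₂⁆, ⁅α₁, α₃⁆, ⁅β₁, α₃⁆,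
    ⁅α₂, β₂⁆, ⁅α₂, α₃⁆, ⁅α₂, β₃⁆, ⁅α₃, β₃⁆ }

/-- The key group-theoretic computation: in any group, elements satisfying (a subset of)
the relations of `Gₙ` are all trivial. -/
lemma key {G : Type*} [Group G] (a1 a2 a3 b1 b2 b3 : G) (m : ℤ)
    (h1 : a2 = ⁅b1⁻¹, b2⁻¹⁆) (h2 : b2 = ⁅b1, a2⁻¹⁆) (h3 : a1 = ⁅b1⁻¹, b3⁻¹⁆)
    (h4 : b1 = ⁅a1⁻¹, b3⁆) (h5 : a3 = ⁅b2⁻¹, b3⁻¹⁆) (h6 : b3 = ⁅b2, a3⁻¹⁆ ^ m)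
    (c12 : ⁅a1, a2⁆ = 1) (c2b3 : ⁅a2, b3⁆ = 1) :
    a1 = 1 ∧ a2 = 1 ∧ a3 = 1 ∧ b1 = 1 ∧ b2 = 1 ∧ b3 = 1 := by
  have C12 : Commute a1 a2 := commutatorElement_eq_one_iff_commute.mp c12
  have C2b3 : Commute a2 b3 := commutatorElement_eq_one_iff_commute.mp c2b3
  -- conjugation of a1 by b3
  have e1 : b3 * a1 * b3⁻¹ = a1 * b1 := by
    rw [h4, commutatorElement_def]; group
  -- conjugation of b1 by b3⁻¹
  have h3' : b3⁻¹ * b1 * b3 = b1 * a1 := by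
    rw [h3, commutatorElement_def]; group
  -- hence conjugation of b1 by b3 is a1⁻¹
  have e2 : b3 * b1 * b3⁻¹ = a1⁻¹ := by
    have step : b1 = (b3 * b1 * b3⁻¹) * (a1 * b1) := by
      conv_lhs => rw [show b1 = b3 * (b3⁻¹ * b1 * b3) * b3⁻¹ by group]
      rw [h3']
      calc b3 * (b1 * a1) * b3⁻¹ = (b3 * b1 * b3⁻¹) * (b3 * a1 * b3⁻¹) := by group
        _ = (b3 * b1 * b3⁻¹) * (a1 * b1) := by rw [e1]
    have : (b3 * b1 * b3⁻¹) * (a1 * b1) = a1⁻¹ * (a1 * b1) := by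
      rw [← step]; group
    exact mul_right_cancel this
  have cb : b1 = b3⁻¹ * a1⁻¹ * b3 := by rw [← e2]; group
  -- a2 commutes with b1
  have comm21 : a2 * b1 = b1 * a2 := by
    rw [cb]
    calc a2 * (b3⁻¹ * a1⁻¹ * b3)
        = (a2 * b3⁻¹) * a1⁻¹ * b3 := by group
      _ = (b3⁻¹ * a2) * a1⁻¹ * b3 := by rw [C2b3.inv_right.eq]
      _ = b3⁻¹ * (a2 * a1⁻¹) * b3 := by group
      _ = b3⁻¹ * (a1⁻¹ * a2) * b3 := by rw [C12.symm.inv_right.eq]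
      _ = (b3⁻¹ * a1⁻¹) * (a2 * b3) := by group
      _ = (b3⁻¹ * a1⁻¹) * (b3 * a2) := by rw [C2b3.eq]
      _ = b3⁻¹ * a1⁻¹ * b3 * a2 := by group
  have Cb1a2 : Commute b1 a2 := comm21.symm
  have hb2 : b2 = 1 := by
    rw [h2]
    exact commutatorElement_eq_one_iff_commute.mpr Cb1a2.inv_right
  have ha2 : a2 = 1 := by rw [hb2] at h1; simpa using h1
  have ha3 : a3 = 1 := by rw [hb2] at h5; simpa using h5
  have hb3 : b3 = 1 := by rw [hb2] at h6; simpa using h6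
  have hb1 : b1 = 1 := by rw [hb3] at h4; simpa using h4
  have ha1 : a1 = 1 := by rw [hb1, hb3] at h3; simpa using h3
  exact ⟨ha1, ha2, ha3, hb1, hb2, hb3⟩

theorem presented_group_trivial (n : ℕ) (hn : 1 ≤ n) :
    ∀ x : PresentedGroup (rels n), x = 1 := by
  -- every relator maps to 1 in the presented group
  have mk1 : ∀ r ∈ rels n, PresentedGroup.mk (rels n) r = 1 := fun r hr =>
    (QuotientGroup.eq_one_iff r).mpr (Subgroup.subset_normalClosure hr)
  set φ : FreeGroup (Fin 6) →* PresentedGroup (rels n) := PresentedGroup.mk (rels n) with hφ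
  have r1 : φ α₂ = ⁅(φ β₁)⁻¹, (φ β₂)⁻¹⁆ := by
    have := mk1 _ (by unfold rels; exact Set.mem_insert _ _)
    rw [map_mul, map_inv, map_commutatorElement, map_inv, map_inv] at this
    exact inv_mul_eq_one.mp this
  have r2 : φ β₂ = ⁅φ β₁, (φ α₂)⁻¹⁆ := by
    have := mk1 _ (by unfold rels; exact Set.mem_insert_of_mem _ (Set.mem_insert _ _))
    rw [map_mul, map_inv, map_commutatorElement, map_inv] at this
    exact inv_mul_eq_one.mp this
  have r3 : φ α₁ = ⁅(φ β₁)⁻¹, (φ β₃)⁻¹⁆ := by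
    have := mk1 _ (by unfold rels; exact Set.mem_insert_of_mem _ (Set.mem_insert_of_mem _ (Set.mem_insert _ _)))
    rw [map_mul, map_inv, map_commutatorElement, map_inv, map_inv] at this
    exact inv_mul_eq_one.mp this
  have r4 : φ β₁ = ⁅(φ α₁)⁻¹, φ β₃⁆ := by
    have := mk1 _ (by unfold rels; exact Set.mem_insert_of_mem _ (Set.mem_insert_of_mem _ (Set.mem_insert_of_mem _ (Set.mem_insert _ _))))
    rw [map_mul, map_inv, map_commutatorElement, map_inv] at this
    exact inv_mul_eq_one.mp this
  have r5 : φ α₃ = ⁅(φ β₂)⁻¹, (φ β₃)⁻¹⁆ := by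
    have := mk1 _ (by unfold rels; exact Set.mem_insert_of_mem _ (Set.mem_insert_of_mem _ (Set.mem_insert_of_mem _ (Set.mem_insert_of_mem _ (Set.mem_insert _ _)))))
    rw [map_mul, map_inv, map_commutatorElement, map_inv, map_inv] at this
    exact inv_mul_eq_one.mp this
  have r6 : φ β₃ = ⁅φ β₂, (φ α₃)⁻¹⁆ ^ (-((n : ℤ) + 1)) := by
    have := mk1 _ (by unfold rels; exact Set.mem_insert_of_mem _ (Set.mem_insert_of_mem _ (Set.mem_insert_of_mem _ (Set.mem_insert_of_mem _ (Set.mem_insert_of_mem _ (Set.mem_insert _ _))))))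
    rw [map_mul, map_inv, map_zpow, map_commutatorElement, map_inv] at this
    exact inv_mul_eq_one.mp this
  have r8 : ⁅φ α₁, φ α₂⁆ = 1 := by
    have := mk1 _ (by unfold rels; exact Set.mem_insert_of_mem _ (Set.mem_insert_of_mem _ (Set.mem_insert_of_mem _ (Set.mem_insert_of_mem _ (Set.mem_insert_of_mem _ (Set.mem_insert_of_mem _ (Set.mem_insert_of_mem _ (Set.mem_insert _ _))))))))
    rwa [map_commutatorElement] at this
  have r14 : ⁅φ α₂, φ β₃⁆ = 1 := by
    have := mk1 _ (by unfold rels; exact Set.mem_insert_of_mem _ (Set.mem_insert_of_mem _ (Set.mem_insert_of_mem _ (Set.mem_insert_of_mem _ (Set.mem_insert_of_mem _ (Set.mem_insert_of_mem _ (Set.mem_insert_of_mem _ (Set.mem_insert_of_mem _ (Set.mem_insert_of_mem _ (Set.mem_insert_of_mem _ (Set.mem_insert_of_mem _ (Set.mem_insert_of_mem _ (Set.mem_insert_of_mem _ (Set.mem_insert _ _))))))))))))))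
    rwa [map_commutatorElement] at this
  obtain ⟨ha1, ha2, ha3, hb1, hb2, hb3⟩ :=
    key (φ α₁) (φ α₂) (φ α₃) (φ β₁) (φ β₂) (φ β₃) (-((n : ℤ) + 1))
      r1 r2 r3 r4 r5 r6 r8 r14
  intro x
  have : x ∈ (⊥ : Subgroup (PresentedGroup (rels n))) := by
    refine PresentedGroup.generated_by (rels n) ⊥ (fun j => ?_) x
    have : (PresentedGroup.of j : PresentedGroup (rels n)) = φ (FreeGroup.of j) := rfl
    rw [Subgroup.mem_bot, this]
    fin_cases j
    · exact ha1
    · exact ha2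
    · exact ha3
    · exact hb1
    · exact hb2
    · exact hb3
  exact Subgroup.mem_bot.mp this

end Stmt1
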